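/- Lemma (every n-simplex is the death simplex of exactly one pair; well-definedness of τ_{r,ω₀}). Let r be an order with levels on X. Then for every n-simplex ω₀ ∈ X^(n) there exists exactly one (n−1)-simplex τ₀ ∈ X^(n−1) such that (τ₀, ω₀) is a persistence pair of r. -/

import Mathlib

open scoped Classical

namespace StableVol

/-- A finite abstract simplicial complex of dimension `n`: a finite family of nonempty
finite subsets of the vertex set, closed under nonempty subsets, in which every element
is contained in an element of cardinality `n+1`. -/
structure NComplex (V : Type*) [DecidableEq V] (n : ℕ) where
  X : Finset (Finset V)
  nonempty_mem : ∀ σ ∈ X, σ.Nonempty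
  down_closed : ∀ σ ∈ X, ∀ σ' : Finset V, σ' ⊆ σ → σ'.Nonempty → σ' ∈ X
  contained_top : ∀ σ ∈ X, ∃ ω ∈ X, σ ⊆ ω ∧ ω.card = n + 1

variable {V : Type*} [DecidableEq V] {n : ℕ}

/-- An `n`-cell is either an `n`-simplex (`some ω`) or the formal cell `ω∞` (`none`). -/
abbrev Cell (V : Type*) := Option (Finset V)

/-- `τ` is a face of the cell `c`.  For `c = some ω` this means that `ω` is an
`n`-simplex of `X` containing `τ`; the faces of `ω∞ = none` are the `(n-1)`-simplices
having exactly one `n`-simplex coface. -/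
def faceCell (C : NComplex V n) (τ : Finset V) : Cell V → Prop
  | some ω => ω ∈ C.X ∧ ω.card = n + 1 ∧ τ ⊆ ω
  | none => {ω | ω ∈ C.X ∧ ω.card = n + 1 ∧ τ ⊆ ω}.ncard = 1

def IsCell (C : NComplex V n) : Cell V → Prop
  | some ω => ω ∈ C.X ∧ ω.card = n + 1
  | none => True

/-- Adjacency in the dual graph, restricted to the edge set `E ⊆ X^(n-1)`. -/
def adj (C : NComplex V n) (E : Set (Finset V)) (c c' : Cell V) : Prop :=
  ∃ τ ∈ E, faceCell C τ c ∧ faceCell C τ c' ∧ c ≠ c'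

/-- `KV C E c₀`: the set of `n`-cells in the connected component of `c₀` in the
subgraph of the dual graph with edge set `E`. -/
def KV (C : NComplex V n) (E : Set (Finset V)) (c₀ : Cell V) : Set (Cell V) :=
  {c | Relation.ReflTransGen (adj C E) c₀ c}

/-- Every `(n-1)`-simplex of `X` is a face of exactly two `n`-cells. -/
def TwoCofaces (C : NComplex V n) : Prop :=
  ∀ τ ∈ C.X, τ.card = n →
    ∃ c₁ c₂ : Cell V, c₁ ≠ c₂ ∧ ∀ c : Cell V, faceCell C τ c ↔ (c = c₁ ∨ c = c₂)

/-- The dual graph (with full edge set `X^(n-1)`) is connected. -/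
def DualConn (C : NComplex V n) : Prop :=
  ∀ c c' : Cell V, IsCell C c → IsCell C c' →
    c' ∈ KV C {τ | τ ∈ C.X ∧ τ.card = n} c

/-- A level function: monotone with respect to strict inclusion of simplices. -/
def IsLevelFun (C : NComplex V n) (lev : Finset V → ℝ) : Prop :=
  ∀ σ ∈ C.X, ∀ σ' ∈ C.X, σ ⊂ σ' → lev σ ≤ lev σ'

/-- `(lev, slt)` is an order with levels on `X`: `lev` is a level function and `slt`
is (the strict form of) a linear order on `X` refining both `lev` and strict
inclusion. -/
def IsOWL (C : NComplex V n) (lev : Finset V → ℝ)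
    (slt : Finset V → Finset V → Prop) : Prop :=
  IsLevelFun C lev ∧
  (∀ σ ∈ C.X, ¬ slt σ σ) ∧
  (∀ σ ∈ C.X, ∀ σ' ∈ C.X, ∀ σ'' ∈ C.X, slt σ σ' → slt σ' σ'' → slt σ σ'') ∧
  (∀ σ ∈ C.X, ∀ σ' ∈ C.X, σ ≠ σ' → slt σ σ' ∨ slt σ' σ) ∧
  (∀ σ ∈ C.X, ∀ σ' ∈ C.X, slt σ σ' → lev σ ≤ lev σ') ∧
  (∀ σ ∈ C.X, ∀ σ' ∈ C.X, σ ⊂ σ' → slt σ σ')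

/-- Extension of a strict order on simplices to `n`-cells, `ω∞ = none` being the
unique maximum. -/
def cslt (slt : Finset V → Finset V → Prop) : Cell V → Cell V → Prop
  | some σ, some σ' => slt σ σ'
  | some _, none => True
  | none, _ => False

/-- `m` is the maximum cell of the set `S` with respect to the order `slt`. -/
def IsMaxCell (slt : Finset V → Finset V → Prop) (S : Set (Cell V)) (m : Cell V) :
    Prop :=
  m ∈ S ∧ ∀ c ∈ S, c ≠ m → cslt slt c m

/-- Edge set of `G(≻ σ₀)`: the `(n-1)`-simplices strictly above `σ₀`. -/
def Egt (C : NComplex V n) (slt : Finset V → Finset V → Prop) (σ₀ : Finset V) :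
    Set (Finset V) :=
  {τ | τ ∈ C.X ∧ τ.card = n ∧ slt σ₀ τ}

/-- Edge set of `G(⪰ σ₀)`. -/
def Ege (C : NComplex V n) (slt : Finset V → Finset V → Prop) (σ₀ : Finset V) :
    Set (Finset V) :=
  {τ | τ ∈ C.X ∧ τ.card = n ∧ (τ = σ₀ ∨ slt σ₀ τ)}

/-- Edge set of `G(lev ≥ s)`. -/
def Elev (C : NComplex V n) (lev : Finset V → ℝ) (s : ℝ) : Set (Finset V) :=
  {τ | τ ∈ C.X ∧ τ.card = n ∧ s ≤ lev τ}

/-- `(τ₀, ω₀)` is a persistence pair of the order `slt`: the two `n`-cells having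
`τ₀` as a face lie in distinct connected components of `G(≻ τ₀)`, and `ω₀` is the
smaller of the two maximum cells of these two components. -/
def IsPersPair (C : NComplex V n) (slt : Finset V → Finset V → Prop)
    (τ₀ ω₀ : Finset V) : Prop :=
  τ₀ ∈ C.X ∧ τ₀.card = n ∧ ω₀ ∈ C.X ∧ ω₀.card = n + 1 ∧
  ∃ c₁ c₂ : Cell V, c₁ ≠ c₂ ∧ faceCell C τ₀ c₁ ∧ faceCell C τ₀ c₂ ∧
    c₂ ∉ KV C (Egt C slt τ₀) c₁ ∧
    ∃ m₂ : Cell V,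
      IsMaxCell slt (KV C (Egt C slt τ₀) c₁) (some ω₀) ∧
      IsMaxCell slt (KV C (Egt C slt τ₀) c₂) m₂ ∧
      cslt slt (some ω₀) m₂

/-- The optimal volume `OV(q, ω₀) = K_V(G(≻_q τ_{q,ω₀}), ω₀)`. -/
def OV (C : NComplex V n) (slt : Finset V → Finset V → Prop) (ω₀ : Finset V) :
    Set (Cell V) :=
  {c | ∃ τ, IsPersPair C slt τ ω₀ ∧ c ∈ KV C (Egt C slt τ) (some ω₀)}

/-- The stable volume `SV_ε(r, τ₀, ω₀) = K_V(G(r̂ ≥ r̂(τ₀) + ε), ω₀)`. -/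
def SV (C : NComplex V n) (lev : Finset V → ℝ) (τ₀ ω₀ : Finset V) (ε : ℝ) :
    Set (Cell V) :=
  KV C (Elev C lev (lev τ₀ + ε)) (some ω₀)

/-- `(qlev, qslt) ∈ R_ε`: an order with levels uniformly `ε/2`-close to `rlev`
satisfying the `(r, ω₀)`-order condition. -/
def InR (C : NComplex V n) (rlev : Finset V → ℝ)
    (rslt : Finset V → Finset V → Prop) (ω₀ : Finset V) (ε : ℝ)
    (qlev : Finset V → ℝ) (qslt : Finset V → Finset V → Prop) : Prop :=
  IsOWL C qlev qslt ∧ (∀ σ ∈ C.X, |qlev σ - rlev σ| < ε / 2) ∧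
  (∀ σ ∈ C.X, rslt σ ω₀ → qslt σ ω₀)

/-- `F_{ε,n}`: the `n`-simplices with level at least `lev τ₀ + ε` that precede `ω₀`. -/
def Fcells (C : NComplex V n) (lev : Finset V → ℝ)
    (slt : Finset V → Finset V → Prop) (τ₀ ω₀ : Finset V) (ε : ℝ) :
    Set (Finset V) :=
  {σ | σ ∈ C.X ∧ σ.card = n + 1 ∧ lev τ₀ + ε ≤ lev σ ∧ slt σ ω₀}

/-- `F_{ε,n-1}`: the `(n-1)`-simplices with level at least `lev τ₀ + ε` that
precede `ω₀`. -/
def Fedges (C : NComplex V n) (lev : Finset V → ℝ)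
    (slt : Finset V → Finset V → Prop) (τ₀ ω₀ : Finset V) (ε : ℝ) :
    Set (Finset V) :=
  {σ | σ ∈ C.X ∧ σ.card = n ∧ lev τ₀ + ε ≤ lev σ ∧ slt σ ω₀}

/-- `τ*(∂z)`: the `ℤ/2ℤ`-sum of the coefficients of `z` over the `n`-simplex
cofaces of `τ`. -/
def bsum (C : NComplex V n) (τ : Finset V) (z : Finset V → ZMod 2) : ZMod 2 :=
  ∑ ω ∈ C.X.filter (fun ω => ω.card = n + 1 ∧ τ ⊆ ω), z ω

/-- A feasible chain `z = ω₀ + Σ_{ω ∈ F_{ε,n}} α_ω ω` with `τ*(∂z) = 0` for all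
`τ ∈ F_{ε,n-1}`. -/
def IsFeasible (C : NComplex V n) (lev : Finset V → ℝ)
    (slt : Finset V → Finset V → Prop) (τ₀ ω₀ : Finset V) (ε : ℝ)
    (z : Finset V → ZMod 2) : Prop :=
  z ω₀ = 1 ∧
  (∀ ω : Finset V, ω ≠ ω₀ → ω ∉ Fcells C lev slt τ₀ ω₀ ε → z ω = 0) ∧
  (∀ τ ∈ Fedges C lev slt τ₀ ω₀ ε, bsum C τ z = 0)

/-- `‖z‖₀`: the number of simplices of `X` with nonzero coefficient in `z`. -/
def norm0 (C : NComplex V n) (z : Finset V → ZMod 2) : ℕ :=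
  (C.X.filter fun ω => z ω ≠ 0).card

/-- The level function of the perturbed order `q(r, η, A)`. -/
noncomputable def pertLev (C : NComplex V n) (rlev : Finset V → ℝ) (η : ℝ)
    (A : Set (Finset V)) : Finset V → ℝ :=
  fun σ => if (σ ∈ C.X ∧ σ.card = n + 1) ∨ σ ∈ A then rlev σ + η else rlev σ - η

/-- The strict order of the perturbed order `q(r, η, A)`. -/
def pertSlt (C : NComplex V n) (rlev : Finset V → ℝ)
    (rslt : Finset V → Finset V → Prop) (η : ℝ) (A : Set (Finset V)) :
    Finset V → Finset V → Prop :=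
  fun σ σ' => pertLev C rlev η A σ < pertLev C rlev η A σ' ∨
    (pertLev C rlev η A σ = pertLev C rlev η A σ' ∧ rslt σ σ')

/-- The `(n-1)`-simplices that are edges of the connected component of `c₀` in the
subgraph with edge set `E`. -/
def compEdges (C : NComplex V n) (E : Set (Finset V)) (c₀ : Cell V) :
    Set (Finset V) :=
  {τ | τ ∈ E ∧ ∃ c, faceCell C τ c ∧ c ∈ KV C E c₀}

/-- `IsPath C E c c' vs es`: `vs` is the vertex list and `es` the edge list of a walk
from `c` to `c'` in the subgraph of the dual graph with edge set `E`. -/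
inductive IsPath (C : NComplex V n) (E : Set (Finset V)) :
    Cell V → Cell V → List (Cell V) → List (Finset V) → Prop
  | nil (c : Cell V) : IsPath C E c c [c] []
  | cons {c c' c'' : Cell V} {vs : List (Cell V)} {es : List (Finset V)}
      {τ : Finset V} : τ ∈ E → faceCell C τ c → faceCell C τ c' → c ≠ c' →
      IsPath C E c' c'' vs es → IsPath C E c c'' (c :: vs) (τ :: es)


section AuxProof

variable {C : NComplex V n} {E E' : Set (Finset V)} {c c' c'' : Cell V}
variable {rlev : Finset V → ℝ} {rslt : Finset V → Finset V → Prop}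

private lemma isCell_of_face {τ : Finset V} (h : faceCell C τ c) : IsCell C c := by
  cases c with
  | none => trivial
  | some ω => exact ⟨h.1, h.2.1⟩

private lemma adj_symm (h : adj C E c c') : adj C E c' c := by
  obtain ⟨τ, hτ, h1, h2, hne⟩ := h
  exact ⟨τ, hτ, h2, h1, hne.symm⟩

private lemma kv_self : c ∈ KV C E c := Relation.ReflTransGen.refl

private lemma kv_tail (h : c' ∈ KV C E c) (h' : adj C E c' c'') : c'' ∈ KV C E c :=
  Relation.ReflTransGen.tail h h'

private lemma kv_trans (h : c' ∈ KV C E c) (h' : c'' ∈ KV C E c') : c'' ∈ KV C E c :=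
  Relation.ReflTransGen.trans h h'

private lemma kv_symm (h : c' ∈ KV C E c) : c ∈ KV C E c' := by
  induction h with
  | refl => exact kv_self
  | tail _ h2 ih => exact kv_trans (Relation.ReflTransGen.single (adj_symm h2)) ih

private lemma kv_eq_of_mem (h : c' ∈ KV C E c) : KV C E c' = KV C E c :=
  Set.ext fun _ => ⟨fun hx => kv_trans h hx, fun hx => kv_trans (kv_symm h) hx⟩

private lemma kv_mono (hE : E ⊆ E') {c : Cell V} : KV C E c ⊆ KV C E' c := fun _ hx =>
  Relation.ReflTransGen.mono (r := adj C E) (p := adj C E')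
    (fun _ _ hab => by
      obtain ⟨τ, hτ, h1, h2, h3⟩ := hab
      exact ⟨τ, hE hτ, h1, h2, h3⟩) _ _ hx

private lemma isCell_of_mem_kv (hc : IsCell C c) (h : c' ∈ KV C E c) : IsCell C c' := by
  induction h with
  | refl => exact hc
  | tail _ h2 _ =>
    obtain ⟨τ, -, -, hf, -⟩ := h2
    exact isCell_of_face hf

private lemma kv_empty_eq (h : c' ∈ KV C (∅ : Set (Finset V)) c) : c' = c := by
  induction h with
  | refl => rfl
  | tail _ h2 ih =>
    obtain ⟨τ, hτ, -⟩ := h2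
    exact absurd hτ (Set.notMem_empty τ)

private lemma cslt_trans (hr : IsOWL C rlev rslt) {a b c : Cell V}
    (ha : IsCell C a) (hb : IsCell C b) (hc : IsCell C c)
    (h1 : cslt rslt a b) (h2 : cslt rslt b c) : cslt rslt a c := by
  cases a with
  | none => exact h1.elim
  | some a =>
    cases b with
    | none => exact h2.elim
    | some b =>
      cases c with
      | none => trivial
      | some c => exact hr.2.2.1 a ha.1 b hb.1 c hc.1 h1 h2

private lemma cslt_irrefl (hr : IsOWL C rlev rslt) {a : Cell V}
    (ha : IsCell C a) : ¬ cslt rslt a a := by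
  cases a with
  | none => exact id
  | some a => exact hr.2.1 a ha.1

private lemma cslt_total (hr : IsOWL C rlev rslt) {a b : Cell V}
    (ha : IsCell C a) (hb : IsCell C b) (hne : a ≠ b) :
    cslt rslt a b ∨ cslt rslt b a := by
  cases a with
  | none =>
    cases b with
    | none => exact absurd rfl hne
    | some b => exact Or.inr trivial
  | some a =>
    cases b with
    | none => exact Or.inl trivial
    | some b =>
      exact hr.2.2.2.1 a ha.1 b hb.1 (fun h => hne (by rw [h]))

private lemma exists_extremal {α : Type*} (r : α → α → Prop) (P : α → Prop)
    (htrans : ∀ a b c, P a → P b → P c → r a b → r b c → r a c)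
    (htot : ∀ a b, P a → P b → a ≠ b → r a b ∨ r b a) :
    ∀ s : Finset α, s.Nonempty → (∀ x ∈ s, P x) →
      ∃ m ∈ s, ∀ x ∈ s, x ≠ m → r x m := by
  classical
  intro s
  induction s using Finset.induction_on with
  | empty => intro h; simp at h
  | @insert a s' ha ih =>
    intro _ hP
    rcases s'.eq_empty_or_nonempty with rfl | hs'
    · refine ⟨a, Finset.mem_insert_self a _, ?_⟩
      intro x hx hne
      rcases Finset.mem_insert.1 hx with rfl | hx
      · exact absurd rfl hne
      · exact absurd hx (Finset.notMem_empty x)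
    · obtain ⟨m, hm, hmax⟩ := ih hs' (fun x hx => hP x (Finset.mem_insert_of_mem hx))
      have hPa : P a := hP a (Finset.mem_insert_self a s')
      have hPm : P m := hP m (Finset.mem_insert_of_mem hm)
      have ham : a ≠ m := fun h => ha (h ▸ hm)
      rcases htot a m hPa hPm ham with h | h
      · refine ⟨m, Finset.mem_insert_of_mem hm, ?_⟩
        intro x hx hne
        rcases Finset.mem_insert.1 hx with rfl | hx
        · exact h
        · exact hmax x hx hne
      · refine ⟨a, Finset.mem_insert_self a s', ?_⟩
        intro x hx hne
        rcases Finset.mem_insert.1 hx with rfl | hx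
        · exact absurd rfl hne
        · by_cases hxm : x = m
          · exact hxm ▸ h
          · exact htrans x m a (hP x (Finset.mem_insert_of_mem hx)) hPm hPa
              (hmax x hx hxm) h

private lemma kv_finite (hc : IsCell C c) : (KV C E c).Finite := by
  apply Set.Finite.subset
    (Set.Finite.insert (none : Cell V) ((C.X.finite_toSet).image some))
  intro x hx
  have hx' := isCell_of_mem_kv hc hx
  cases x with
  | none => exact Set.mem_insert _ _
  | some ω => exact Set.mem_insert_of_mem _ ⟨ω, hx'.1, rfl⟩

private lemma exists_max_KV (hr : IsOWL C rlev rslt) (hc : IsCell C c) :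
    ∃ m, IsMaxCell rslt (KV C E c) m := by
  have hfin : (KV C E c).Finite := kv_finite hc
  obtain ⟨m, hm, hmax⟩ := exists_extremal (cslt rslt) (IsCell C)
    (fun a b c pa pb pc => cslt_trans hr pa pb pc)
    (fun a b pa pb => cslt_total hr pa pb)
    hfin.toFinset ⟨c, hfin.mem_toFinset.2 kv_self⟩
    (fun x hx => isCell_of_mem_kv hc (hfin.mem_toFinset.1 hx))
  exact ⟨m, hfin.mem_toFinset.1 hm,
    fun x hx hne => hmax x (hfin.mem_toFinset.2 hx) hne⟩

private lemma Egt_subset_Ege {σ : Finset V} : Egt C rslt σ ⊆ Ege C rslt σ :=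
  fun τ h => ⟨h.1, h.2.1, Or.inr h.2.2⟩

private lemma Ege_eq_insert {σ : Finset V} (hσ : σ ∈ C.X) (hcard : σ.card = n) :
    Ege C rslt σ = insert σ (Egt C rslt σ) := by
  ext τ
  simp only [Ege, Egt, Set.mem_setOf_eq, Set.mem_insert_iff]
  constructor
  · rintro ⟨h1, h2, (rfl | h3)⟩
    · exact Or.inl rfl
    · exact Or.inr ⟨h1, h2, h3⟩
  · rintro (rfl | ⟨h1, h2, h3⟩)
    · exact ⟨hσ, hcard, Or.inl rfl⟩
    · exact ⟨h1, h2, Or.inr h3⟩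

private lemma Ege_subset_Egt (hr : IsOWL C rlev rslt) {σ₀ σ₁ : Finset V}
    (h0 : σ₀ ∈ C.X) (h1 : σ₁ ∈ C.X) (h01 : rslt σ₀ σ₁) :
    Ege C rslt σ₁ ⊆ Egt C rslt σ₀ := by
  intro τ h
  refine ⟨h.1, h.2.1, ?_⟩
  rcases h.2.2 with rfl | h3
  · exact h01
  · exact hr.2.2.1 σ₀ h0 σ₁ h1 τ h.1 h01 h3

private lemma kv_insert_subset {τ : Finset V} {c₁ c₂ : Cell V}
    (hface : ∀ c, faceCell C τ c ↔ (c = c₁ ∨ c = c₂)) (c : Cell V) :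
    KV C (insert τ E) c ⊆ KV C E c ∪ KV C E c₁ ∪ KV C E c₂ := by
  intro x hx
  induction hx with
  | refl => exact Or.inl (Or.inl kv_self)
  | tail hab hbc ih =>
    obtain ⟨τ', hτ', f1, f2, hne⟩ := hbc
    rcases Set.mem_insert_iff.1 hτ' with rfl | hτ'E
    · rcases (hface _).1 f2 with rfl | rfl
      · exact Or.inl (Or.inr kv_self)
      · exact Or.inr kv_self
    · rcases ih with (h | h) | h
      · exact Or.inl (Or.inl (kv_tail h ⟨τ', hτ'E, f1, f2, hne⟩))
      · exact Or.inl (Or.inr (kv_tail h ⟨τ', hτ'E, f1, f2, hne⟩))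
      · exact Or.inr (kv_tail h ⟨τ', hτ'E, f1, f2, hne⟩)

private lemma kv_insert_touch {τ : Finset V} {c₁ c₂ : Cell V}
    (hface : ∀ c, faceCell C τ c ↔ (c = c₁ ∨ c = c₂)) {c x : Cell V}
    (hx : x ∈ KV C (insert τ E) c) :
    x ∉ KV C E c → c₁ ∈ KV C E c ∨ c₂ ∈ KV C E c := by
  induction hx with
  | refl => exact fun h => absurd kv_self h
  | @tail b x' hab hbc ih =>
    intro hnx
    obtain ⟨τ', hτ', f1, f2, hne⟩ := hbc
    by_cases hb : b ∈ KV C E c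
    · rcases Set.mem_insert_iff.1 hτ' with rfl | hτ'E
      · rcases (hface _).1 f1 with rfl | rfl
        · exact Or.inl hb
        · exact Or.inr hb
      · exact absurd (kv_tail hb ⟨τ', hτ'E, f1, f2, hne⟩) hnx
    · exact ih hb

end AuxProof

/-- every `n`-simplex is the death simplex of exactly one
persistence pair. -/
theorem existsUnique_birth_simplex
    (hn : 2 ≤ n) (C : NComplex V n) (htwo : TwoCofaces C) (hconn : DualConn C)
    (rlev : Finset V → ℝ) (rslt : Finset V → Finset V → Prop)
    (hr : IsOWL C rlev rslt) :
    ∀ ω₀ ∈ C.X, ω₀.card = n + 1 →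
      ∃! τ₀ : Finset V, IsPersPair C rslt τ₀ ω₀ := by
  classical
  intro ω₀ hω₀ hcard
  have hcellω₀ : IsCell C (some ω₀) := ⟨hω₀, hcard⟩
  have hirr := hr.2.1
  have htra := hr.2.2.1
  have htot := hr.2.2.2.1
  set Tf : Finset (Finset V) := C.X.filter (fun τ => τ.card = n) with hTfdef
  have hTfmem : ∀ τ, τ ∈ Tf ↔ (τ ∈ C.X ∧ τ.card = n) := fun τ => Finset.mem_filter
  have hTfne : Tf.Nonempty := by
    obtain ⟨t, hts, htc⟩ := Finset.exists_subset_card_eq (show n ≤ ω₀.card by omega)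
    have htX : t ∈ C.X :=
      C.down_closed ω₀ hω₀ t hts (Finset.card_pos.1 (by omega))
    exact ⟨t, (hTfmem t).2 ⟨htX, htc⟩⟩
  set S : Finset (Finset V) :=
    Tf.filter (fun τ => ∃ c ∈ KV C (Ege C rslt τ) (some ω₀), cslt rslt (some ω₀) c)
    with hSdef
  have hSmem : ∀ τ, τ ∈ S ↔
      τ ∈ Tf ∧ ∃ c ∈ KV C (Ege C rslt τ) (some ω₀), cslt rslt (some ω₀) c :=
    fun τ => Finset.mem_filter
  -- S is nonempty: the minimal (n-1)-simplex works
  have hSne : S.Nonempty := by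
    obtain ⟨τm, hτm, hmin⟩ := exists_extremal (fun a b => rslt b a) (· ∈ C.X)
      (fun a b c pa pb pc h1 h2 => htra c pc b pb a pa h2 h1)
      (fun a b pa pb h => htot b pb a pa (Ne.symm h)
        ) Tf hTfne (fun σ hσ => ((hTfmem σ).1 hσ).1)
    have hsub : {τ | τ ∈ C.X ∧ τ.card = n} ⊆ Ege C rslt τm := by
      intro τ hτ
      by_cases h : τ = τm
      · exact ⟨hτ.1, hτ.2, Or.inl h⟩
      · exact ⟨hτ.1, hτ.2, Or.inr (hmin τ ((hTfmem τ).2 hτ) h)⟩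
    have hnone : (none : Cell V) ∈ KV C (Ege C rslt τm) (some ω₀) :=
      kv_mono hsub (hconn (some ω₀) none hcellω₀ trivial)
    exact ⟨τm, (hSmem τm).2 ⟨hτm, ⟨none, hnone, trivial⟩⟩⟩
  -- τ₀ is the maximum of S
  obtain ⟨τ₀, hτ₀S, hτ₀max⟩ := exists_extremal rslt (· ∈ C.X)
    (fun a b c pa pb pc => htra a pa b pb c pc)
    (fun a b pa pb => htot a pa b pb)
    S hSne (fun σ hσ => ((hTfmem σ).1 ((hSmem σ).1 hσ).1).1)
  obtain ⟨hτ₀Tf, cs, hcsKV, hcslt⟩ := (hSmem τ₀).1 hτ₀S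
  obtain ⟨hτ₀X, hτ₀card⟩ := (hTfmem τ₀).1 hτ₀Tf
  -- nothing above ω₀ in its component of G(≻ τ₀)
  have Hnomax : ∀ c ∈ KV C (Egt C rslt τ₀) (some ω₀), ¬ cslt rslt (some ω₀) c := by
    intro c hc hlt
    set A : Finset (Finset V) := Tf.filter (fun τ => rslt τ₀ τ) with hAdef
    rcases A.eq_empty_or_nonempty with hAe | hAne
    · have hsub : Egt C rslt τ₀ ⊆ (∅ : Set (Finset V)) := by
        intro τ hτ
        have hτA : τ ∈ A :=
          Finset.mem_filter.2 ⟨(hTfmem τ).2 ⟨hτ.1, hτ.2.1⟩, hτ.2.2⟩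
        rw [hAe] at hτA
        exact absurd hτA (Finset.notMem_empty τ)
      have hc' : c = some ω₀ := kv_empty_eq (kv_mono hsub hc)
      exact cslt_irrefl hr hcellω₀ (hc' ▸ hlt)
    · obtain ⟨τs, hτsA, hτsmin⟩ := exists_extremal (fun a b => rslt b a) (· ∈ C.X)
        (fun a b c pa pb pc h1 h2 => htra c pc b pb a pa h2 h1)
        (fun a b pa pb h => htot b pb a pa (Ne.symm h))
        A hAne (fun σ hσ => ((hTfmem σ).1 (Finset.mem_filter.1 hσ).1).1)
      have hτsTf : τs ∈ Tf := (Finset.mem_filter.1 hτsA).1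
      obtain ⟨hτsX, hτscard⟩ := (hTfmem τs).1 hτsTf
      have hτ₀τs : rslt τ₀ τs := (Finset.mem_filter.1 hτsA).2
      have hsub2 : Egt C rslt τ₀ ⊆ Ege C rslt τs := by
        intro τ hτ
        have hτA : τ ∈ A :=
          Finset.mem_filter.2 ⟨(hTfmem τ).2 ⟨hτ.1, hτ.2.1⟩, hτ.2.2⟩
        by_cases h : τ = τs
        · exact ⟨hτ.1, hτ.2.1, Or.inl h⟩
        · exact ⟨hτ.1, hτ.2.1, Or.inr (hτsmin τ hτA h)⟩
      have hτsS : τs ∈ S := (hSmem τs).2 ⟨hτsTf, c, kv_mono hsub2 hc, hlt⟩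
      by_cases h : τs = τ₀
      · exact hirr τ₀ hτ₀X (h ▸ hτ₀τs)
      · exact hirr τ₀ hτ₀X (htra τ₀ hτ₀X τs hτsX τ₀ hτ₀X hτ₀τs (hτ₀max τs hτsS h))
  -- the two cofaces of τ₀
  obtain ⟨c₁, c₂, hc12, hface⟩ := htwo τ₀ hτ₀X hτ₀card
  have hEge : Ege C rslt τ₀ = insert τ₀ (Egt C rslt τ₀) :=
    Ege_eq_insert hτ₀X hτ₀card
  rw [hEge] at hcsKV
  have hcsnot : cs ∉ KV C (Egt C rslt τ₀) (some ω₀) := fun h => Hnomax cs h hcslt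
  have htouch : c₁ ∈ KV C (Egt C rslt τ₀) (some ω₀) ∨
      c₂ ∈ KV C (Egt C rslt τ₀) (some ω₀) :=
    kv_insert_touch hface hcsKV hcsnot
  -- main construction (symmetric in the two cofaces)
  have key : ∀ d₁ d₂ : Cell V, d₁ ≠ d₂ →
      (∀ c, faceCell C τ₀ c ↔ (c = d₁ ∨ c = d₂)) →
      d₁ ∈ KV C (Egt C rslt τ₀) (some ω₀) → IsPersPair C rslt τ₀ ω₀ := by
    intro d₁ d₂ hdne hdface hd₁
    have hKVeq : KV C (Egt C rslt τ₀) d₁ = KV C (Egt C rslt τ₀) (some ω₀) :=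
      kv_eq_of_mem hd₁
    have hmax1 : IsMaxCell rslt (KV C (Egt C rslt τ₀) d₁) (some ω₀) := by
      constructor
      · rw [hKVeq]; exact kv_self
      · intro c hc hne
        rw [hKVeq] at hc
        have hcCell : IsCell C c := isCell_of_mem_kv hcellω₀ hc
        cases c with
        | none => exact absurd trivial (Hnomax none hc)
        | some σ =>
          have hσne : σ ≠ ω₀ := fun h => hne (by rw [h])
          rcases htot σ hcCell.1 ω₀ hω₀ hσne with h | h
          · exact h
          · exact absurd h (Hnomax (some σ) hc)
    have hcs2 : cs ∈ KV C (Egt C rslt τ₀) d₂ := by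
      rcases kv_insert_subset hdface (some ω₀) hcsKV with (h | h) | h
      · exact absurd h hcsnot
      · rw [hKVeq] at h; exact absurd h hcsnot
      · exact h
    have hd₂not : d₂ ∉ KV C (Egt C rslt τ₀) d₁ := by
      intro h
      have hcs1 : cs ∈ KV C (Egt C rslt τ₀) d₁ := kv_trans h hcs2
      rw [hKVeq] at hcs1
      exact hcsnot hcs1
    have hd₂cell : IsCell C d₂ := isCell_of_face ((hdface d₂).2 (Or.inr rfl))
    obtain ⟨m₂, hm₂⟩ := exists_max_KV (E := Egt C rslt τ₀) hr hd₂cell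
    have hm₂gt : cslt rslt (some ω₀) m₂ := by
      by_cases h : cs = m₂
      · exact h ▸ hcslt
      · exact cslt_trans hr hcellω₀ (isCell_of_mem_kv hd₂cell hcs2)
          (isCell_of_mem_kv hd₂cell hm₂.1) hcslt (hm₂.2 cs hcs2 h)
    exact ⟨hτ₀X, hτ₀card, hω₀, hcard, d₁, d₂, hdne,
      (hdface d₁).2 (Or.inl rfl), (hdface d₂).2 (Or.inr rfl), hd₂not,
      m₂, hmax1, hm₂, hm₂gt⟩
  have hexist : IsPersPair C rslt τ₀ ω₀ := by
    rcases htouch with h | h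
    · exact key c₁ c₂ hc12 hface h
    · exact key c₂ c₁ hc12.symm (fun c => (hface c).trans or_comm) h
  refine ⟨τ₀, hexist, ?_⟩
  -- uniqueness
  intro τ₁ hp
  obtain ⟨hτ₁X, hτ₁card, -, -, d₁, d₂, hdne, hfd₁, hfd₂, hd₂not, m₂,
    hmax1, hmax2, hgt⟩ := hp
  have hc₀d₁ : some ω₀ ∈ KV C (Egt C rslt τ₁) d₁ := hmax1.1
  have hτ₁S : τ₁ ∈ S := by
    refine (hSmem τ₁).2 ⟨(hTfmem τ₁).2 ⟨hτ₁X, hτ₁card⟩, m₂, ?_, hgt⟩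
    have hτ₁E : τ₁ ∈ Ege C rslt τ₁ := ⟨hτ₁X, hτ₁card, Or.inl rfl⟩
    have h1 : some ω₀ ∈ KV C (Ege C rslt τ₁) d₁ := kv_mono Egt_subset_Ege hc₀d₁
    have h2 : d₂ ∈ KV C (Ege C rslt τ₁) d₁ :=
      Relation.ReflTransGen.single ⟨τ₁, hτ₁E, hfd₁, hfd₂, hdne⟩
    have h3 : m₂ ∈ KV C (Ege C rslt τ₁) d₂ := kv_mono Egt_subset_Ege hmax2.1
    exact kv_trans (kv_trans (kv_symm h1) h2) h3
  have hno : ∀ τ ∈ S, ¬ rslt τ₁ τ := by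
    intro τ hτS h
    obtain ⟨hτTf, c, hcKV, hclt⟩ := (hSmem τ).1 hτS
    obtain ⟨hτX, hτcard⟩ := (hTfmem τ).1 hτTf
    have hsub : Ege C rslt τ ⊆ Egt C rslt τ₁ := Ege_subset_Egt hr hτ₁X hτX h
    have hcKV' : c ∈ KV C (Egt C rslt τ₁) d₁ :=
      kv_trans hc₀d₁ (kv_mono hsub hcKV)
    have hcne : c ≠ some ω₀ := fun he => cslt_irrefl hr hcellω₀ (he ▸ hclt)
    have hccell : IsCell C c := isCell_of_mem_kv (isCell_of_face hfd₁) hcKV'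
    exact cslt_irrefl hr hcellω₀
      (cslt_trans hr hcellω₀ hccell hcellω₀ hclt (hmax1.2 c hcKV' hcne))
  by_cases h : τ₁ = τ₀
  · exact h
  · exact absurd (hτ₀max τ₁ hτ₁S h) (hno τ₀ hτ₀S)

end StableVol
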